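/- The stable spline kernel matrix K_β with entries [K_β]_{i,j} = β^{max(i,j)}, for β ∈ (0,1), is positive definite for every n ≥ 1. -/

import Mathlib

/-- The first-order stable spline kernel matrix
`[K_β]_{i,j} = β^{max(i,j)}` (1-based indices `1,…,n`) is positive definite
for every `β ∈ (0,1)` and every `n ≥ 1`. -/
theorem stable_spline_kernel_posDef
    (n : ℕ) (hn : 1 ≤ n) (β : ℝ) (hβ0 : 0 < β) (hβ1 : β < 1)
    (K : Matrix (Fin n) (Fin n) ℝ)
    (hK : ∀ i j, K i j = β ^ (max (i : ℕ) (j : ℕ) + 1)) :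
    K.PosDef := by
  classical
  -- truncated geometric tail
  set f : ℕ → ℝ := fun k => if k < n then β ^ (k + 1) else 0 with hf
  set dnat : ℕ → ℝ := fun k => f k - f (k + 1) with hdnat
  set d : Fin n → ℝ := fun k => dnat k with hd
  -- all diagonal entries are positive
  have hdpos : ∀ k : Fin n, 0 < d k := by
    intro k
    have hk : (k : ℕ) < n := k.isLt
    have hfk : f k = β ^ ((k : ℕ) + 1) := by simp [hf, hk]
    have hpow : 0 < β ^ ((k : ℕ) + 1) := pow_pos hβ0 _
    by_cases hk1 : (k : ℕ) + 1 < n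
    · have hfk1 : f ((k : ℕ) + 1) = β ^ ((k : ℕ) + 2) := by simp [hf, hk1]
      have : β ^ ((k : ℕ) + 2) < β ^ ((k : ℕ) + 1) := by
        calc β ^ ((k : ℕ) + 2) = β ^ ((k : ℕ) + 1) * β := by ring
        _ < β ^ ((k : ℕ) + 1) * 1 := by
              exact mul_lt_mul_of_pos_left hβ1 hpow
        _ = β ^ ((k : ℕ) + 1) := by ring
      simp [hd, hdnat, hfk, hfk1]
      linarith
    · have hfk1 : f ((k : ℕ) + 1) = 0 := by simp [hf, hk1]
      simp [hd, hdnat, hfk, hfk1, hpow]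
  -- the lower triangular all-ones matrix
  set A : Matrix (Fin n) (Fin n) ℝ :=
    Matrix.of (fun k i => if (i : ℕ) ≤ (k : ℕ) then 1 else 0) with hA
  -- telescoping sum
  have htel : ∀ m : ℕ, m ≤ n →
      (∑ k ∈ Finset.range n, (if m ≤ k then dnat k else 0)) = f m := by
    intro m hm
    have h1 : (∑ k ∈ Finset.range n, (if m ≤ k then dnat k else 0))
        = ∑ k ∈ Finset.Ico m n, dnat k := by
      rw [Finset.range_eq_Ico, ← Finset.sum_Ico_consecutive _ (Nat.zero_le m) hm]
      have h2 : (∑ k ∈ Finset.Ico 0 m, (if m ≤ k then dnat k else 0)) = 0 := by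
        apply Finset.sum_eq_zero
        intro k hk
        simp only [Finset.mem_Ico] at hk
        simp [Nat.not_le.mpr hk.2]
      have h3 : (∑ k ∈ Finset.Ico m n, (if m ≤ k then dnat k else 0))
          = ∑ k ∈ Finset.Ico m n, dnat k := by
        apply Finset.sum_congr rfl
        intro k hk
        simp only [Finset.mem_Ico] at hk
        simp [hk.1]
      rw [h2, h3, zero_add]
    rw [h1]
    have h4 : (∑ k ∈ Finset.Ico m n, dnat k)
        = (∑ k ∈ Finset.range n, dnat k) - ∑ k ∈ Finset.range m, dnat k :=
      Finset.sum_Ico_eq_sub _ hm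
    have h5 : (∑ k ∈ Finset.range n, dnat k) = f 0 - f n := Finset.sum_range_sub' f n
    have h6 : (∑ k ∈ Finset.range m, dnat k) = f 0 - f m := Finset.sum_range_sub' f m
    have hfn : f n = 0 := by simp [hf]
    rw [h4, h5, h6, hfn]
    ring
  -- the factorization K = Aᵀ * D * A
  have hfact : K = A.conjTranspose * Matrix.diagonal d * A := by
    ext i j
    have hij : max (i : ℕ) (j : ℕ) < n := by
      simp [Nat.max_lt, i.isLt, j.isLt]
    rw [hK]
    rw [Matrix.mul_apply]
    simp only [Matrix.mul_diagonal, Matrix.conjTranspose_apply, hA,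
      Matrix.of_apply, star_trivial]
    have : ∀ k : Fin n,
        (if (i : ℕ) ≤ (k : ℕ) then (1:ℝ) else 0) * d k *
          (if (j : ℕ) ≤ (k : ℕ) then (1:ℝ) else 0)
        = (if max (i : ℕ) (j : ℕ) ≤ (k : ℕ) then dnat k else 0) := by
      intro k
      by_cases h1 : (i : ℕ) ≤ (k : ℕ) <;> by_cases h2 : (j : ℕ) ≤ (k : ℕ) <;>
        simp [h1, h2, Nat.max_le, hd]
    rw [Finset.sum_congr rfl fun k _ => this k]
    rw [Fin.sum_univ_eq_sum_range (fun k => if max (i : ℕ) (j : ℕ) ≤ k then dnat k else 0)]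
    rw [htel _ hij.le]
    simp [hf, hij]
  -- A is invertible
  have hAunit : IsUnit A := by
    rw [Matrix.isUnit_iff_isUnit_det]
    have htri : A.BlockTriangular OrderDual.toDual := by
      intro i j hij
      have hlt : i < j := hij
      have : (i : ℕ) < (j : ℕ) := hlt
      simp only [hA, Matrix.of_apply, ite_eq_right_iff, one_ne_zero, imp_false, Nat.not_le]
      exact this
    rw [Matrix.det_of_lowerTriangular A htri]
    simp [hA]
  have hAinj : Function.Injective (A.mulVec) := Matrix.mulVec_injective_iff_isUnit.mpr hAunit
  have hD : (Matrix.diagonal d).PosDef := Matrix.PosDef.diagonal hdpos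
  refine Matrix.PosDef.of_dotProduct_mulVec_pos ?_ ?_
  · rw [hfact]
    exact Matrix.isHermitian_conjTranspose_mul_mul A (Matrix.isHermitian_diagonal d)
  · intro x hx
    have hAx : A.mulVec x ≠ 0 := by
      intro h
      apply hx
      apply hAinj
      rw [h, Matrix.mulVec_zero]
    rw [hfact]
    simpa only [Matrix.star_mulVec, Matrix.dotProduct_mulVec, Matrix.vecMul_vecMul,
      ← Matrix.mul_assoc] using
      hD.dotProduct_mulVec_pos hAx
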